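/- arXiv:0911.0530 — 3 statements merged into one kernel-verified Lean document; each statement's English description precedes it below -/
import Mathlib

section
/- If p is analytic on the unit disk E with p(0) = 1, α : E → ℂ is analytic with Re α(z) > 0 on E, 0 ≤ β < 1, and Re[p(z) + z p'(z)/α(z)] > β for all z ∈ E, then Re p(z) > β for all z ∈ E. -/
open Metric Complex Set Filter Topology

private lemma aux_deriv_nonpos {g : ℝ → ℝ} {d : ℝ}
    (hg : HasDerivAt g d 1) (h : ∀ t ∈ Set.Icc (0:ℝ) 1, g 1 ≤ g t) : d ≤ 0 := by
  have ht : Tendsto (slope g 1) (𝓝[≠] (1:ℝ)) (𝓝 d) :=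
    hasDerivAt_iff_tendsto_slope.mp hg
  have ht' : Tendsto (slope g 1) (𝓝[<] (1:ℝ)) (𝓝 d) :=
    ht.mono_left (nhdsWithin_mono _ (fun x hx => ne_of_lt hx))
  refine le_of_tendsto ht' ?_
  have h0 : ∀ᶠ t in 𝓝[<] (1:ℝ), (0:ℝ) < t :=
    eventually_nhdsWithin_of_eventually_nhds (eventually_gt_nhds one_pos)
  filter_upwards [self_mem_nhdsWithin, h0] with t ht1 ht0
  have ht1' : t < 1 := ht1
  have h1 : g 1 ≤ g t := h t ⟨le_of_lt ht0, le_of_lt ht1'⟩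
  have hs : slope g 1 t = (g t - g 1) / (t - 1) := slope_def_field g 1 t
  rw [hs]
  exact div_nonpos_of_nonneg_of_nonpos (by linarith) (by linarith)

theorem stmt3 (p α : ℂ → ℂ) (β : ℝ)
    (hp : DifferentiableOn ℂ p (ball (0 : ℂ) 1)) (hp0 : p 0 = 1)
    (hα : DifferentiableOn ℂ α (ball (0 : ℂ) 1))
    (hαpos : ∀ z ∈ ball (0 : ℂ) 1, 0 < (α z).re)
    (hβ0 : 0 ≤ β) (hβ1 : β < 1)
    (h : ∀ z ∈ ball (0 : ℂ) 1, β < (p z + z * deriv p z / α z).re) :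
    ∀ z ∈ ball (0 : ℂ) 1, β < (p z).re := by
  by_contra hcon
  push_neg at hcon
  obtain ⟨z₀, hz₀b, hz₀β⟩ := hcon
  rw [mem_ball_zero_iff] at hz₀b
  set u : ℂ → ℝ := fun z => (p z).re with hu
  have hsub : closedBall (0:ℂ) ‖z₀‖ ⊆ ball (0:ℂ) 1 := by
    intro z hz
    rw [mem_closedBall_zero_iff] at hz
    rw [mem_ball_zero_iff]
    exact lt_of_le_of_lt hz hz₀b
  have hpc : ContinuousOn u (closedBall (0:ℂ) ‖z₀‖) :=
    continuous_re.comp_continuousOn (hp.continuousOn.mono hsub)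
  set K : Set ℂ := closedBall (0:ℂ) ‖z₀‖ ∩ u ⁻¹' (Set.Iic β) with hK
  have hKc : IsCompact K := by
    refine (isCompact_closedBall _ _).of_isClosed_subset ?_ Set.inter_subset_left
    exact hpc.preimage_isClosed_of_isClosed Metric.isClosed_closedBall isClosed_Iic
  have hKne : K.Nonempty := ⟨z₀, by
    refine ⟨mem_closedBall_zero_iff.mpr le_rfl, ?_⟩
    simpa using hz₀β⟩
  obtain ⟨z₁, hz₁K, hz₁min⟩ := hKc.exists_isMinOn hKne continuous_norm.continuousOn
  obtain ⟨hz₁r, hz₁β'⟩ := hz₁K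
  rw [mem_closedBall_zero_iff] at hz₁r
  have hz₁β : u z₁ ≤ β := hz₁β'
  have hz₁b : z₁ ∈ ball (0:ℂ) 1 := mem_ball_zero_iff.mpr (lt_of_le_of_lt hz₁r hz₀b)
  have hz₁ne : z₁ ≠ 0 := by
    intro h0
    rw [h0] at hz₁β
    simp [hu, hp0] at hz₁β
    linarith
  have hz₁pos : (0:ℝ) < ‖z₁‖ := norm_pos_iff.mpr hz₁ne
  -- points strictly inside the circle of radius ‖z₁‖ have u > β
  have hgt : ∀ z : ℂ, ‖z‖ < ‖z₁‖ → β < u z := by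
    intro z hz
    by_contra hle
    push_neg at hle
    have hzK : z ∈ K := ⟨mem_closedBall_zero_iff.mpr (le_of_lt (lt_of_lt_of_le hz hz₁r)), hle⟩
    exact absurd (hz₁min hzK) (not_le.mpr hz)
  -- points on the circle have u ≥ β
  have hsphere : ∀ z : ℂ, ‖z‖ = ‖z₁‖ → β ≤ u z := by
    intro z hz
    by_contra hlt
    push_neg at hlt
    have hzb : z ∈ ball (0:ℂ) 1 := mem_ball_zero_iff.mpr (hz ▸ lt_of_le_of_lt hz₁r hz₀b)
    have hpz : ContinuousAt p z := (hp.differentiableAt (isOpen_ball.mem_nhds hzb)).continuousAt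
    have hmul : Tendsto (fun t : ℝ => (t:ℂ) * z) (𝓝 1) (𝓝 z) := by
      have : ContinuousAt (fun t : ℝ => (t:ℂ) * z) 1 :=
        (Complex.continuous_ofReal.mul continuous_const).continuousAt
      simpa [ContinuousAt] using this
    have hct : Tendsto (fun t : ℝ => u ((t:ℂ) * z)) (𝓝 1) (𝓝 (u z)) :=
      (Complex.continuous_re.tendsto (p z)).comp (hpz.tendsto.comp hmul)
    have hev : ∀ᶠ t : ℝ in 𝓝 (1:ℝ), u ((t:ℂ) * z) < β := hct.eventually_lt_const hlt
    have hev' : ∀ᶠ t : ℝ in 𝓝[<] (1:ℝ), (u ((t:ℂ) * z) < β ∧ (0:ℝ) < t) ∧ t < 1 := by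
      filter_upwards [eventually_nhdsWithin_of_eventually_nhds hev,
        eventually_nhdsWithin_of_eventually_nhds (eventually_gt_nhds one_pos),
        self_mem_nhdsWithin] with t h1 h2 h3
      exact ⟨⟨h1, h2⟩, h3⟩
    obtain ⟨t, ⟨htu, htpos⟩, ht1⟩ := hev'.exists
    have hnorm : ‖(t:ℂ) * z‖ < ‖z₁‖ := by
      rw [norm_mul, Complex.norm_real, Real.norm_eq_abs, _root_.abs_of_pos htpos, hz]
      nlinarith
    exact absurd (hgt _ hnorm) (not_lt.mpr (le_of_lt htu))
  have huz₁ : u z₁ = β := le_antisymm hz₁β (hsphere z₁ rfl)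
  -- derivative of p at z₁
  have hdp : DifferentiableAt ℂ p z₁ := hp.differentiableAt (isOpen_ball.mem_nhds hz₁b)
  set c : ℂ := deriv p z₁ with hc
  have hcd : HasDerivAt p c z₁ := hdp.hasDerivAt
  set w : ℂ := z₁ * c with hw
  -- radial derivative: Re w ≤ 0
  have hrad : HasDerivAt (fun t : ℝ => u ((t:ℂ) * z₁)) w.re 1 := by
    have h1 : HasDerivAt (fun t : ℝ => (t:ℂ) * z₁) z₁ 1 := by
      simpa using (Complex.ofRealCLM.hasDerivAt (x := (1:ℝ))).mul_const z₁
    have hcd1 : HasDerivAt p c ((fun t : ℝ => (t:ℂ) * z₁) 1) := by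
      simpa using hcd
    have h2 : HasDerivAt (fun t : ℝ => p ((t:ℂ) * z₁)) (z₁ • c) 1 := by
      have := HasDerivAt.scomp (x := (1:ℝ)) hcd1 h1
      exact this
    have h3 := Complex.reCLM.hasFDerivAt.comp_hasDerivAt 1 h2
    convert h3 using 1 <;> first | rfl | simp [hw, smul_eq_mul]
  have hwre : w.re ≤ 0 := by
    refine aux_deriv_nonpos hrad ?_
    intro t ht
    rcases eq_or_lt_of_le ht.2 with h1 | h1
    · simp [h1]
    · have hn : ‖(t:ℂ) * z₁‖ < ‖z₁‖ := by
        rw [norm_mul, Complex.norm_real, Real.norm_eq_abs, _root_.abs_of_nonneg ht.1]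
        nlinarith
      have h2 := hgt _ hn
      simp only [Complex.ofReal_one, one_mul]
      linarith [huz₁]
  -- tangential derivative: Im w = 0
  have htan : HasDerivAt (fun θ : ℝ => u (Complex.exp ((θ:ℂ) * Complex.I) * z₁)) (-w.im) 0 := by
    have h1 : HasDerivAt (fun θ : ℝ => (θ:ℂ) * Complex.I) Complex.I 0 := by
      simpa using (Complex.ofRealCLM.hasDerivAt (x := (0:ℝ))).mul_const Complex.I
    have hexp : HasDerivAt Complex.exp (Complex.exp ((fun θ : ℝ => (θ:ℂ) * Complex.I) 0))
        ((fun θ : ℝ => (θ:ℂ) * Complex.I) 0) := Complex.hasDerivAt_exp _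
    have h2 : HasDerivAt (fun θ : ℝ => Complex.exp ((θ:ℂ) * Complex.I)) Complex.I 0 := by
      have := HasDerivAt.scomp (x := (0:ℝ)) hexp h1
      convert this using 1 <;> first | rfl | simp
    have h3 : HasDerivAt (fun θ : ℝ => Complex.exp ((θ:ℂ) * Complex.I) * z₁) (Complex.I * z₁) 0 :=
      h2.mul_const z₁
    have hcd0 : HasDerivAt p c ((fun θ : ℝ => Complex.exp ((θ:ℂ) * Complex.I) * z₁) 0) := by
      simp only [Complex.ofReal_zero, zero_mul, Complex.exp_zero, one_mul]
      exact hcd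
    have h4 : HasDerivAt (fun θ : ℝ => p (Complex.exp ((θ:ℂ) * Complex.I) * z₁))
        ((Complex.I * z₁) • c) 0 := by
      have := HasDerivAt.scomp (x := (0:ℝ)) hcd0 h3
      exact this
    have h5 := Complex.reCLM.hasFDerivAt.comp_hasDerivAt 0 h4
    have hre : (Complex.I * z₁ * c).re = -w.im := by
      rw [mul_assoc, hw]
      simp [Complex.mul_re, Complex.I_re, Complex.I_im]
    convert h5 using 1 <;> first | rfl | simp [smul_eq_mul, hre]
  have hwim : w.im = 0 := by
    have hminθ : IsLocalMin (fun θ : ℝ => u (Complex.exp ((θ:ℂ) * Complex.I) * z₁)) 0 := by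
      refine Filter.Eventually.of_forall fun θ => ?_
      have hn : ‖Complex.exp ((θ:ℂ) * Complex.I) * z₁‖ = ‖z₁‖ := by
        rw [norm_mul, Complex.norm_exp]
        simp
      have h2 := hsphere _ hn
      simp only [Complex.ofReal_zero, zero_mul, Complex.exp_zero, one_mul]
      linarith [huz₁]
    have := hminθ.hasDerivAt_eq_zero htan
    linarith
  -- conclude
  have hαz : 0 < (α z₁).re := hαpos z₁ hz₁b
  have hwα : (w / α z₁).re ≤ 0 := by
    rw [Complex.div_re, hwim]
    have h1 : w.re * (α z₁).re ≤ 0 := mul_nonpos_of_nonpos_of_nonneg hwre (le_of_lt hαz)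
    have h2 : (0:ℝ) ≤ Complex.normSq (α z₁) := Complex.normSq_nonneg _
    have := div_nonpos_of_nonpos_of_nonneg h1 h2
    simpa using this
  have hmain := h z₁ hz₁b
  rw [Complex.add_re] at hmain
  have hpz₁ : (p z₁).re = β := huz₁
  have hweq : z₁ * deriv p z₁ / α z₁ = w / α z₁ := by rw [hw, hc]
  rw [hweq, hpz₁] at hmain
  linarith
end

section
/- If p is analytic on the unit disk E with p(0) = 1, c > −1 and c + γ > 0 with 0 ≤ γ < 1, p(z) + c ≠ 0 on E, and Re[p(z) + z p'(z)/(c + p(z))] > γ for all z ∈ E, then Re p(z) > γ for all z ∈ E. -/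
open Metric Set Filter Complex Topology

theorem stmt4 (p : ℂ → ℂ) (c γ : ℝ)
    (hp : DifferentiableOn ℂ p (ball (0 : ℂ) 1)) (hp0 : p 0 = 1)
    (hc : -1 < c) (hcγ : 0 < c + γ) (hγ0 : 0 ≤ γ) (hγ1 : γ < 1)
    (hne : ∀ z ∈ ball (0 : ℂ) 1, p z + (c : ℂ) ≠ 0)
    (h : ∀ z ∈ ball (0 : ℂ) 1, γ < (p z + z * deriv p z / ((c : ℂ) + p z)).re) :
    ∀ z ∈ ball (0 : ℂ) 1, γ < (p z).re := by
  intro z₁ hz₁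
  by_contra hcon
  push_neg at hcon
  have hz₁n : ‖z₁‖ < 1 := mem_ball_zero_iff.mp hz₁
  set K := closedBall (0 : ℂ) ‖z₁‖ with hKdef
  have hKsub : K ⊆ ball (0 : ℂ) 1 := closedBall_subset_ball hz₁n
  have hpc : ContinuousOn (fun z => (p z).re) K :=
    Complex.continuous_re.comp_continuousOn (hp.continuousOn.mono hKsub)
  set T := K ∩ (fun z => (p z).re) ⁻¹' (Iic γ) with hTdef
  have hTclosed : IsClosed T :=
    hpc.preimage_isClosed_of_isClosed isClosed_closedBall isClosed_Iic
  have hTcompact : IsCompact T :=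
    (isCompact_closedBall _ _).of_isClosed_subset hTclosed inter_subset_left
  have hTne : T.Nonempty :=
    ⟨z₁, mem_closedBall_zero_iff.mpr le_rfl, by simpa using hcon⟩
  obtain ⟨z₀, hz₀T, hz₀min⟩ := hTcompact.exists_isMinOn hTne continuous_norm.continuousOn
  have hz₀min' : ∀ z ∈ T, ‖z₀‖ ≤ ‖z‖ := fun z hz => hz₀min hz
  have hz₀K : ‖z₀‖ ≤ ‖z₁‖ := mem_closedBall_zero_iff.mp hz₀T.1
  have hz₀le : (p z₀).re ≤ γ := hz₀T.2
  have hz₀1 : ‖z₀‖ < 1 := lt_of_le_of_lt hz₀K hz₁n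
  have hz₀ball : z₀ ∈ ball (0 : ℂ) 1 := mem_ball_zero_iff.mpr hz₀1
  -- strictly inside radius ‖z₀‖, Re p > γ
  have hlt : ∀ z : ℂ, ‖z‖ < ‖z₀‖ → γ < (p z).re := by
    intro z hz
    by_contra hzle
    push_neg at hzle
    have hzT : z ∈ T := ⟨mem_closedBall_zero_iff.mpr (le_of_lt (lt_of_lt_of_le hz hz₀K)),
      by simpa using hzle⟩
    exact absurd (hz₀min' z hzT) (not_le.mpr hz)
  have hR0 : 0 < ‖z₀‖ := by
    rcases eq_or_lt_of_le (norm_nonneg z₀) with h0 | h0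
    · exfalso
      have : z₀ = 0 := norm_eq_zero.mp h0.symm
      rw [this, hp0] at hz₀le
      simp at hz₀le
      linarith
    · exact h0
  -- on the closed ball of radius ‖z₀‖, Re p ≥ γ
  have hge : ∀ z : ℂ, ‖z‖ ≤ ‖z₀‖ → γ ≤ (p z).re := by
    intro z hz
    rcases lt_or_eq_of_le hz with hz' | hz'
    · exact le_of_lt (hlt z hz')
    · -- approach z radially
      have hzball : z ∈ ball (0 : ℂ) 1 := mem_ball_zero_iff.mpr (hz' ▸ hz₀1)
      have hpz : ContinuousAt p z :=
        (hp.differentiableAt (isOpen_ball.mem_nhds hzball)).continuousAt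
      have hcont : ContinuousAt (fun t : ℝ => (p ((t : ℂ) * z)).re) 1 := by
        apply Complex.continuous_re.continuousAt.comp
        apply ContinuousAt.comp (x := (1 : ℝ))
        · simpa using hpz
        · exact (continuous_ofReal.mul continuous_const).continuousAt
      have htend : Tendsto (fun t : ℝ => (p ((t : ℂ) * z)).re) (𝓝[<] (1 : ℝ))
          (𝓝 ((p z).re)) := by
        have := hcont.continuousWithinAt (s := Iio (1 : ℝ))
        simpa using this.tendsto
      refine ge_of_tendsto htend ?_
      filter_upwards [Ioo_mem_nhdsLT_of_mem (by constructor <;> norm_num : (1 : ℝ) ∈ Ioc (0 : ℝ) 1)]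
        with t ht
      have : ‖(t : ℂ) * z‖ < ‖z₀‖ := by
        rw [norm_mul, Complex.norm_real, Real.norm_eq_abs, abs_of_pos ht.1, ← hz']
        calc t * ‖z‖ < 1 * ‖z‖ := by
              apply mul_lt_mul_of_pos_right ht.2
              rw [hz']; exact hR0
          _ = ‖z‖ := one_mul _
      exact le_of_lt (hlt _ this)
  have hz₀eq : (p z₀).re = γ := le_antisymm hz₀le (hge z₀ le_rfl)
  -- derivative of p at z₀
  have hpd : HasDerivAt p (deriv p z₀) z₀ :=
    (hp.differentiableAt (isOpen_ball.mem_nhds hz₀ball)).hasDerivAt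
  set d := deriv p z₀ with hd
  -- angular derivative: Im (z₀ * d) = 0
  have hang : ((d * (z₀ * Complex.I)).re) = 0 := by
    have hinner : HasDerivAt (fun w : ℂ => z₀ * Complex.exp (w * Complex.I))
        (z₀ * Complex.I) 0 := by
      have h1 : HasDerivAt (fun w : ℂ => w * Complex.I) Complex.I 0 := by
        simpa using (hasDerivAt_id (0 : ℂ)).mul_const Complex.I
      have h2 := h1.cexp
      simpa using h2.const_mul z₀
    have hcomp : HasDerivAt (fun w : ℂ => p (z₀ * Complex.exp (w * Complex.I)))
        (d * (z₀ * Complex.I)) 0 := by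
      have : HasDerivAt p d (z₀ * Complex.exp ((0 : ℂ) * Complex.I)) := by
        simpa using hpd
      exact this.comp 0 hinner
    have hφ : HasDerivAt (fun θ : ℝ => (p (z₀ * Complex.exp ((θ : ℂ) * Complex.I))).re)
        ((d * (z₀ * Complex.I)).re) 0 := by
      have := hcomp.real_of_complex
      simpa using this
    have hmin : IsLocalMin (fun θ : ℝ => (p (z₀ * Complex.exp ((θ : ℂ) * Complex.I))).re) 0 := by
      apply Filter.Eventually.of_forall
      intro θ
      have hn : ‖z₀ * Complex.exp ((θ : ℂ) * Complex.I)‖ = ‖z₀‖ := by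
        rw [norm_mul, Complex.norm_exp_ofReal_mul_I,
          mul_one]
      have := hge _ (le_of_eq hn)
      simpa [hz₀eq] using this
    exact hmin.hasDerivAt_eq_zero hφ
  have hIm : (z₀ * d).im = 0 := by
    have : (d * (z₀ * Complex.I)).re = -(d * z₀).im := by
      rw [← mul_assoc]
      simp [Complex.mul_re, Complex.mul_im, Complex.I_re, Complex.I_im]
    rw [this] at hang
    have : (d * z₀).im = 0 := by linarith
    rwa [mul_comm] at this
  -- radial derivative: Re (z₀ * d) ≤ 0
  have hrad : ((d * z₀).re) ≤ 0 := by
    have hcomp : HasDerivAt (fun w : ℂ => p (w * z₀)) (d * z₀) 1 := by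
      have hinner : HasDerivAt (fun w : ℂ => w * z₀) z₀ 1 := by
        simpa using (hasDerivAt_id (1 : ℂ)).mul_const z₀
      have hpd' : HasDerivAt p d ((1 : ℂ) * z₀) := by simpa using hpd
      exact hpd'.comp 1 hinner
    have hψ : HasDerivAt (fun t : ℝ => (p ((t : ℂ) * z₀)).re) ((d * z₀).re) 1 := by
      have := hcomp.real_of_complex
      simpa using this
    have hslope : Tendsto (slope (fun t : ℝ => (p ((t : ℂ) * z₀)).re) 1)
        (𝓝[<] (1 : ℝ)) (𝓝 ((d * z₀).re)) := by
      have := hasDerivAt_iff_tendsto_slope.mp hψ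
      exact this.mono_left (nhdsWithin_mono _ (fun x hx => ne_of_lt hx))
    refine le_of_tendsto hslope ?_
    filter_upwards [Ioo_mem_nhdsLT_of_mem (by constructor <;> norm_num : (1 : ℝ) ∈ Ioc (0 : ℝ) 1)]
      with t ht
    have hnum : (0 : ℝ) ≤ (p ((t : ℂ) * z₀)).re - (p (((1 : ℝ) : ℂ) * z₀)).re := by
      have hn : ‖(t : ℂ) * z₀‖ ≤ ‖z₀‖ := by
        rw [norm_mul, Complex.norm_real, Real.norm_eq_abs, abs_of_pos ht.1]
        nlinarith [hR0, ht.2.le]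
      have h1 := hge _ hn
      simp only [Complex.ofReal_one, one_mul]
      linarith [hz₀eq ▸ h1]
    have hden : t - 1 < 0 := by linarith [ht.2]
    rw [slope_def_field]
    simp only [Complex.ofReal_one] at hnum ⊢
    exact div_nonpos_of_nonneg_of_nonpos (by linarith) hden.le
  -- contradiction with the hypothesis at z₀
  have hkey := h z₀ hz₀ball
  have hcw : ((c : ℂ) + p z₀) ≠ 0 := by
    have := hne z₀ hz₀ball
    rwa [add_comm] at this
  have hre : ((c : ℂ) + p z₀).re = c + γ := by
    simp [Complex.add_re, hz₀eq]
  have him : ((c : ℂ) + p z₀).im = (p z₀).im := by simp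
  have hdivre : (z₀ * d / ((c : ℂ) + p z₀)).re ≤ 0 := by
    rw [Complex.div_re, hre]
    have h1 : (z₀ * d).re ≤ 0 := by rw [mul_comm]; exact hrad
    have h2 : (z₀ * d).im = 0 := hIm
    rw [h2]
    simp only [zero_mul, zero_div, add_zero]
    apply div_nonpos_of_nonpos_of_nonneg
    · exact mul_nonpos_of_nonpos_of_nonneg h1 hcγ.le
    · exact Complex.normSq_nonneg _
  rw [Complex.add_re, hz₀eq, ← hd] at hkey
  linarith
end

section
/- If p is analytic on the unit disk with p(0)=1, α analytic with Re α(z) > 0, γ > 1, and Re[p(z) + z p'(z)/(1 + α(z))] < γ on E, then Re p(z) < γ on E (the 'reversed' case γ > 1 of the Babalola–Opoola lemma with ψ(u,v) = u + v/(1+α)). -/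
open Metric Complex Set Filter Topology

theorem stmt13 (p α : ℂ → ℂ) (γ : ℝ)
    (hp : DifferentiableOn ℂ p (ball (0 : ℂ) 1)) (hp0 : p 0 = 1)
    (hα : DifferentiableOn ℂ α (ball (0 : ℂ) 1))
    (hαpos : ∀ z ∈ ball (0 : ℂ) 1, 0 < (α z).re)
    (hγ : 1 < γ)
    (h : ∀ z ∈ ball (0 : ℂ) 1, (p z + z * deriv p z / (1 + α z)).re < γ) :
    ∀ z ∈ ball (0 : ℂ) 1, (p z).re < γ := by
  by_contra hcon
  push_neg at hcon
  obtain ⟨z₁, hz₁, hz₁γ⟩ := hcon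
  have hr₁ : ‖z₁‖ < 1 := by simpa [mem_ball, dist_zero_right] using hz₁
  set r₁ : ℝ := ‖z₁‖ with hr₁def
  have hsub : closedBall (0:ℂ) r₁ ⊆ ball (0:ℂ) 1 := closedBall_subset_ball hr₁
  have hpc : ContinuousOn (fun z => (p z).re) (closedBall (0:ℂ) r₁) :=
    Complex.continuous_re.comp_continuousOn (hp.continuousOn.mono hsub)
  set K : Set ℂ := closedBall (0:ℂ) r₁ ∩ (fun z => (p z).re) ⁻¹' (Ici γ) with hKdef
  have hKclosed : IsClosed K :=
    hpc.preimage_isClosed_of_isClosed isClosed_closedBall isClosed_Ici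
  have hKcomp : IsCompact K :=
    (isCompact_closedBall (0:ℂ) r₁).of_isClosed_subset hKclosed inter_subset_left
  have hz₁K : z₁ ∈ K := ⟨mem_closedBall_zero_iff.mpr le_rfl, hz₁γ⟩
  obtain ⟨z₀', hz₀'K, hmin⟩ := hKcomp.exists_isMinOn ⟨z₁, hz₁K⟩ continuous_norm.continuousOn
  set r₀ : ℝ := ‖z₀'‖ with hr₀def
  have hr₀pos : 0 < r₀ := by
    rcases eq_or_ne z₀' 0 with h0 | h0
    · exfalso
      have := hz₀'K.2
      rw [h0] at this
      simp only [Set.mem_preimage, hp0, Complex.one_re, mem_Ici] at this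
      linarith
    · simpa [hr₀def] using norm_pos_iff.mpr h0
  have hr₀le : r₀ ≤ r₁ := by
    simpa [mem_closedBall, dist_zero_right] using hz₀'K.1
  -- points of norm < r₀ satisfy (p z).re < γ
  have hneg : ∀ z : ℂ, ‖z‖ < r₀ → (p z).re < γ := by
    intro z hzr
    by_contra hge
    push_neg at hge
    have hzK : z ∈ K := ⟨by
      simp only [mem_closedBall, dist_zero_right]; linarith, hge⟩
    have := hmin hzK
    simp only [IsMinOn, IsMinFilter] at this
    exact absurd (hmin hzK) (by simp [hr₀def]; exact hzr)
  -- maximize on the sphere of radius r₀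
  have hz₀'S : z₀' ∈ sphere (0:ℂ) r₀ := by simp [mem_sphere, dist_zero_right, hr₀def]
  have hScont : ContinuousOn (fun z => (p z).re) (sphere (0:ℂ) r₀) := by
    apply hpc.mono
    intro z hz
    simp only [mem_sphere, dist_zero_right] at hz
    simp [mem_closedBall, dist_zero_right, hz, hr₀le]
  obtain ⟨z₀, hz₀S, hmax⟩ := (isCompact_sphere (0:ℂ) r₀).exists_isMaxOn ⟨z₀', hz₀'S⟩ hScont
  have hz₀norm : ‖z₀‖ = r₀ := by simpa [mem_sphere, dist_zero_right] using hz₀S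
  have hz₀ball : z₀ ∈ ball (0:ℂ) 1 := by
    simp only [mem_ball, dist_zero_right, hz₀norm]
    linarith
  have hz₀γ : γ ≤ (p z₀).re := le_trans hz₀'K.2 (hmax hz₀'S)
  -- derivative of p at z₀
  have hpz₀ : HasDerivAt p (deriv p z₀) z₀ :=
    (hp.differentiableAt (isOpen_ball.mem_nhds hz₀ball)).hasDerivAt
  set c : ℂ := deriv p z₀ with hcdef
  have hFp : HasFDerivAt p (((1 : ℂ →L[ℂ] ℂ).smulRight c).restrictScalars ℝ) z₀ :=
    hpz₀.hasFDerivAt.restrictScalars ℝ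
  -- tangential derivative: Im (z₀ * c) = 0
  have hIm : (z₀ * c).im = 0 := by
    have hinner : HasDerivAt (fun θ : ℝ => Complex.exp (θ * Complex.I) * z₀)
        (Complex.I * z₀) 0 := by
      have h1 := ((((hasDerivAt_id (0:ℂ)).mul_const Complex.I).cexp).mul_const z₀).comp_ofReal
        (z := 0)
      simpa using h1
    have hcomp : HasDerivAt (fun θ : ℝ => (p (Complex.exp (θ * Complex.I) * z₀)).re)
        ((Complex.I * z₀ * c).re) 0 := by
      have h2 : HasDerivAt (fun θ : ℝ => p (Complex.exp (θ * Complex.I) * z₀))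
          ((Complex.I * z₀) • c) 0 := by
        have := hFp.comp_hasDerivAt_of_eq (x := (0:ℝ)) hinner (by simp)
        simpa [Function.comp_def] using this
      have := (Complex.reCLM.hasFDerivAt (x := p z₀)).comp_hasDerivAt_of_eq (x := (0:ℝ)) h2
        (by simp)
      simpa [smul_eq_mul, Function.comp_def] using this
    have hlocmax : IsLocalMax (fun θ : ℝ => (p (Complex.exp (θ * Complex.I) * z₀)).re) 0 := by
      apply Filter.Eventually.of_forall
      intro θ
      have hmem : Complex.exp (θ * Complex.I) * z₀ ∈ sphere (0:ℂ) r₀ := by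
        simp [mem_sphere, dist_zero_right, Complex.norm_exp_ofReal_mul_I, hz₀norm]
      simpa using hmax hmem
    have h0 := hlocmax.hasDerivAt_eq_zero hcomp
    have h0' : (Complex.I * (z₀ * c)).re = 0 := by rw [← mul_assoc]; exact h0
    simp [Complex.mul_re] at h0'
    rw [Complex.mul_im]
    linarith
  -- radial derivative: 0 ≤ (z₀ * c).re
  have hRe : 0 ≤ (z₀ * c).re := by
    have hinner : HasDerivAt (fun t : ℝ => (t : ℂ) * z₀) z₀ 1 := by
      have h1 : HasDerivAt (fun w : ℂ => w * z₀) z₀ 1 := by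
        simpa using (hasDerivAt_id (1:ℂ)).mul_const z₀
      simpa using h1.comp_ofReal (z := 1)
    have hG : HasDerivAt (fun t : ℝ => (p ((t : ℂ) * z₀)).re) ((z₀ * c).re) 1 := by
      have h2 : HasDerivAt (fun t : ℝ => p ((t : ℂ) * z₀)) (z₀ • c) 1 := by
        have := hFp.comp_hasDerivAt_of_eq (x := (1:ℝ)) hinner (by simp)
        simpa [Function.comp_def] using this
      have := (Complex.reCLM.hasFDerivAt (x := p z₀)).comp_hasDerivAt_of_eq (x := (1:ℝ)) h2
        (by simp)
      simpa [smul_eq_mul, Function.comp_def] using this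
    have hslope : Tendsto (slope (fun t : ℝ => (p ((t : ℂ) * z₀)).re) 1)
        (𝓝[<] (1:ℝ)) (𝓝 ((z₀ * c).re)) :=
      (hasDerivAt_iff_tendsto_slope.mp hG).mono_left
        (nhdsWithin_mono _ (fun x hx => ne_of_lt hx))
    refine ge_of_tendsto hslope ?_
    filter_upwards [Ioo_mem_nhdsLT (by norm_num : (0:ℝ) < 1)]
      with t ht
    have htnorm : ‖(t : ℂ) * z₀‖ < r₀ := by
      rw [norm_mul, Complex.norm_real, Real.norm_eq_abs, abs_of_pos ht.1, hz₀norm]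
      nlinarith [ht.2, hr₀pos]
    have h1 : (p ((t : ℂ) * z₀)).re < γ := hneg _ htnorm
    rw [slope_def_field]
    have hnum : (p ((t : ℂ) * z₀)).re - (p (((1:ℝ) : ℂ) * z₀)).re ≤ 0 := by
      simp only [Complex.ofReal_one, one_mul]
      linarith
    have hden : t - 1 < 0 := by linarith [ht.2]
    have := div_nonneg (neg_nonneg.mpr hnum) (neg_nonneg.mpr hden.le)
    rwa [neg_div_neg_eq] at this
  -- final contradiction
  have hcontra := h z₀ hz₀ball
  have hwre : 0 < (1 + α z₀).re := by
    have := hαpos z₀ hz₀ball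
    simp only [Complex.add_re, Complex.one_re]
    linarith
  have hzc : z₀ * c = ((z₀ * c).re : ℂ) := by
    apply Complex.ext <;> simp [hIm]
  have hdiv : 0 ≤ (z₀ * c / (1 + α z₀)).re := by
    rw [hzc, Complex.div_re]
    have hns : 0 ≤ Complex.normSq (1 + α z₀) := Complex.normSq_nonneg _
    have : (((z₀*c).re : ℂ)).re = (z₀*c).re := by simp
    simp only [Complex.ofReal_re, Complex.ofReal_im]
    have h1 : 0 ≤ (z₀ * c).re * (1 + α z₀).re / Complex.normSq (1 + α z₀) :=
      div_nonneg (mul_nonneg hRe (le_of_lt hwre)) hns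
    simpa using h1
  rw [Complex.add_re, ← hcdef] at hcontra
  linarith
end
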